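/- Let R be a principal ideal domain with fraction field K, and let M be a finitely generated R-module. If there exists r ∈ ℕ such that dim_K(K ⊗_R M) = r and dim_{R/m}(M/mM) = r for every maximal ideal m ⊆ R, then M is a free R-module of rank r. -/

import Mathlib

open TensorProduct

section Aux
variable (R A M N : Type*) [CommRing R] [CommRing A] [Algebra R A]
  [AddCommGroup M] [Module R M] [AddCommGroup N] [Module R N]

/-- `A`-linear version of `TensorProduct.prodRight`. -/
lemma prodRight_smul (a : A) (x : A ⊗[R] (M × N)) :
    TensorProduct.prodRight R A A M N (a • x) = a • TensorProduct.prodRight R A A M N x := by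
  induction x using TensorProduct.induction_on with
  | zero => simp
  | tmul b p =>
    obtain ⟨p₁, p₂⟩ := p
    simp [TensorProduct.smul_tmul', Prod.smul_def, smul_eq_mul]
  | add x y hx hy => simp only [smul_add, map_add, hx, hy]

noncomputable def prodRightAlg : A ⊗[R] (M × N) ≃ₗ[A] (A ⊗[R] M) × (A ⊗[R] N) :=
  { TensorProduct.prodRight R A A M N with
    map_smul' := fun a x => prodRight_smul R A M N a x }

lemma subsingleton_fractionRing_tensor
    [IsDomain R] (h : ∀ x : M, ∃ a : nonZeroDivisors R, a • x = (0 : M)) :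
    Subsingleton (FractionRing R ⊗[R] M) := by
  set K := FractionRing R
  refine subsingleton_of_forall_eq 0 fun x => ?_
  induction x using TensorProduct.induction_on with
  | zero => rfl
  | tmul k t =>
    obtain ⟨a, ha⟩ := h t
    rw [Submonoid.smul_def] at ha
    have hk : k = (a : R) • ((algebraMap R K a)⁻¹ * k) := by
      rw [Algebra.smul_def, ← mul_assoc, mul_inv_cancel₀, one_mul]
      exact IsFractionRing.to_map_ne_zero_of_mem_nonZeroDivisors a.2
    rw [hk, TensorProduct.smul_tmul, ha, TensorProduct.tmul_zero]
  | add x y hx hy => rw [hx, hy, add_zero]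

end Aux

set_option maxHeartbeats 1000000 in
/-- Let `R` be a PID with fraction field `K` and `M` a finitely generated `R`-module.
If there is `r : ℕ` with `dim_K (K ⊗[R] M) = r` and `dim_{R/m} (M/mM) = r` (i.e.
`dim_{R/m} ((R/m) ⊗[R] M) = r`) for every maximal ideal `m ⊆ R`, then `M` is a free
`R`-module of rank `r`. -/
theorem stmt_1 (R : Type*) [CommRing R] [IsDomain R] [IsPrincipalIdealRing R]
    (M : Type*) [AddCommGroup M] [Module R M] [Module.Finite R M] (r : ℕ)
    (hK : Module.finrank (FractionRing R) (FractionRing R ⊗[R] M) = r)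
    (hm : ∀ m : Ideal R, m.IsMaximal →
      Module.finrank (R ⧸ m) ((R ⧸ m) ⊗[R] M) = r) :
    Module.Free R M ∧ Module.finrank R M = r := by
  set K := FractionRing R
  suffices hT : Submodule.torsion R M = ⊥ by
    have : Module.IsTorsionFree R M :=
      (Submodule.isTorsionFree_iff_torsion_eq_bot).mpr hT
    have hfree : Module.Free R M := Module.free_of_finite_type_torsion_free'
    refine ⟨hfree, ?_⟩
    rw [← hK, Module.finrank_baseChange]
  by_contra hT
  -- setup
  set T : Submodule R M := Submodule.torsion R M
  set F := M ⧸ T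
  have : IsNoetherian R M := inferInstance
  have hTfin : Module.Finite R T := Module.Finite.iff_fg.mpr (IsNoetherian.noetherian T)
  have hFtf : Module.IsTorsionFree R F :=
    (Submodule.isTorsionFree_iff_torsion_eq_bot).mpr
      Submodule.QuotientTorsion.torsion_eq_bot
  have hFfree : Module.Free R F := Module.free_of_finite_type_torsion_free'
  -- splitting M ≃ T × F
  obtain ⟨s, hs⟩ := T.mkQ.exists_rightInverse_of_surjective (Submodule.range_mkQ T)
  have hsinj : Function.Injective s := by
    intro x y hxy
    have := congrArg T.mkQ hxy
    rw [← LinearMap.comp_apply, ← LinearMap.comp_apply, hs] at this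
    simpa using this
  have hproj : ∀ x : LinearMap.range s,
      ((s ∘ₗ T.mkQ).codRestrict (LinearMap.range s) (fun x => LinearMap.mem_range_self s _)) x = x := by
    rintro ⟨-, y, rfl⟩
    ext
    simp only [LinearMap.codRestrict_apply, LinearMap.comp_apply]
    rw [← LinearMap.comp_apply T.mkQ s, hs]
    simp
  have hker : LinearMap.ker ((s ∘ₗ T.mkQ).codRestrict (LinearMap.range s)
      (fun x => LinearMap.mem_range_self s _)) = T := by
    ext x
    simp only [LinearMap.mem_ker]
    constructor
    · intro h
      have : s (T.mkQ x) = 0 := congrArg Subtype.val h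
      have : T.mkQ x = 0 := hsinj (by simpa using this)
      simpa [Submodule.Quotient.mk_eq_zero] using this
    · intro h
      ext
      have : T.mkQ x = 0 := by simpa [Submodule.Quotient.mk_eq_zero] using h
      simp [this]
  have hcompl : IsCompl T (LinearMap.range s) := by
    have := LinearMap.isCompl_of_proj hproj
    rw [hker] at this
    exact this.symm
  have eS : (LinearMap.range s) ≃ₗ[R] F := (LinearEquiv.ofInjective s hsinj).symm
  have eM : M ≃ₗ[R] T × F :=
    (Submodule.prodEquivOfIsCompl T (LinearMap.range s) hcompl).symm ≪≫ₗ
      (LinearEquiv.refl R T).prodCongr eS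
  -- K-side: r = finrank R F
  have hKT : Subsingleton (K ⊗[R] T) := by
    refine subsingleton_fractionRing_tensor R T fun x => ?_
    obtain ⟨a, ha⟩ := x.2
    exact ⟨a, Subtype.ext ha⟩
  have eK : (K ⊗[R] M) ≃ₗ[K] (K ⊗[R] T) × (K ⊗[R] F) :=
    (LinearEquiv.baseChange R K M (T × F) eM) ≪≫ₗ prodRightAlg R K T F
  have hn : (r : ℕ) = Module.finrank R F := by
    rw [← hK, eK.finrank_eq, Module.finrank_prod, Module.finrank_baseChange (M' := F)]
    have : Module.finrank K (K ⊗[R] T) = 0 := Module.finrank_zero_of_subsingleton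
    omega
  -- choose maximal ideal containing the annihilator
  have hann : Module.annihilator R T ≠ ⊤ := by
    intro h
    apply hT
    refine (Submodule.eq_bot_iff _).mpr fun x hx => ?_
    have := Module.mem_annihilator.mp (h ▸ Submodule.mem_top : (1 : R) ∈ Module.annihilator R T)
      ⟨x, hx⟩
    simpa using congrArg Subtype.val this
  obtain ⟨m, hmax, hle⟩ := Ideal.exists_le_maximal _ hann
  letI : Field (R ⧸ m) := Ideal.Quotient.field m
  have eA : ((R ⧸ m) ⊗[R] M) ≃ₗ[R ⧸ m] ((R ⧸ m) ⊗[R] T) × ((R ⧸ m) ⊗[R] F) :=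
    (LinearEquiv.baseChange R (R ⧸ m) M (T × F) eM) ≪≫ₗ prodRightAlg R (R ⧸ m) T F
  have hdim : Module.finrank (R ⧸ m) ((R ⧸ m) ⊗[R] T) = 0 := by
    have := hm m hmax
    rw [eA.finrank_eq, Module.finrank_prod, Module.finrank_baseChange (M' := F)] at this
    omega
  have hsub : Subsingleton ((R ⧸ m) ⊗[R] T) := by
    have : Module.Finite (R ⧸ m) ((R ⧸ m) ⊗[R] T) := inferInstance
    exact Module.finrank_zero_iff.mp hdim
  -- transport to T ⧸ mT
  have hsub2 : Subsingleton (T ⧸ (m • ⊤ : Submodule R T)) :=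
    (quotTensorEquivQuotSMul T m).symm.toEquiv.subsingleton
  have htop : (m • ⊤ : Submodule R T) = ⊤ :=
    Submodule.Quotient.subsingleton_iff.mp hsub2
  -- Nakayama
  obtain ⟨c, hc1, hc0⟩ := Submodule.exists_sub_one_mem_and_smul_eq_zero_of_fg_of_le_smul
    m (⊤ : Submodule R T) (IsNoetherian.noetherian _) (le_of_eq htop.symm)
  have hcm : c ∈ m := hle (Module.mem_annihilator.mpr fun x => hc0 x Submodule.mem_top)
  have : (1 : R) ∈ m := by
    have := m.sub_mem hcm hc1
    simpa using this
  exact hmax.ne_top (Ideal.eq_top_iff_one m |>.mpr this)
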